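/- In a ladder (L, P, Q) with rails P = p_1...p_ℓ and Q = q_1...q_m in which all crosses are trivial, for any integer value h there are at most two rungs p_i q_j with i + j = h, and if there are two rungs of the same value then they form a trivial cross. -/
import Mathlib


open SimpleGraph

/-- In a ladder with rails `P = p_1…p_ℓ` and `Q = q_1…q_m` in which all crosses are
trivial, for any value `h` there are at most two rungs `p_i q_j` with `i + j = h`, and
any two distinct rungs of the same value form a trivial cross. -/
theorem stmt14 {V : Type*} (L : SimpleGraph V) (l m : ℕ)
    (p : Fin l → V) (q : Fin m → V)
    (hpinj : Function.Injective p) (hqinj : Function.Injective q)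
    (hdisj : ∀ i j, p i ≠ q j)
    (hP : ∀ i j : Fin l, L.Adj (p i) (p j) ↔ ((i : ℕ) + 1 = j ∨ (j : ℕ) + 1 = i))
    (hQ : ∀ i j : Fin m, L.Adj (q i) (q j) ↔ ((i : ℕ) + 1 = j ∨ (j : ℕ) + 1 = i))
    (hcross : ∀ (a c : Fin l) (b d : Fin m), L.Adj (p a) (q b) → L.Adj (p c) (q d) →
      (a : ℕ) < c → (d : ℕ) < b → ((c : ℕ) = a + 1 ∧ (b : ℕ) = d + 1)) :
    ∀ h : ℕ,
      Set.ncard {x : Fin l × Fin m |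
        L.Adj (p x.1) (q x.2) ∧ (x.1 : ℕ) + (x.2 : ℕ) = h} ≤ 2 ∧
      ∀ (i i' : Fin l) (j j' : Fin m), L.Adj (p i) (q j) → L.Adj (p i') (q j') →
        (i : ℕ) + (j : ℕ) = h → (i' : ℕ) + (j' : ℕ) = h → (i, j) ≠ (i', j') →
        (((i : ℕ) < i' ∧ (j' : ℕ) < j ∧ (i' : ℕ) = i + 1 ∧ (j : ℕ) = j' + 1) ∨
         ((i' : ℕ) < i ∧ (j : ℕ) < j' ∧ (i : ℕ) = i' + 1 ∧ (j' : ℕ) = j + 1)) := by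
  intro h
  have key : ∀ (i i' : Fin l) (j j' : Fin m), L.Adj (p i) (q j) → L.Adj (p i') (q j') →
      (i : ℕ) + (j : ℕ) = h → (i' : ℕ) + (j' : ℕ) = h → (i : ℕ) < i' →
      (i' : ℕ) = i + 1 ∧ (j : ℕ) = j' + 1 := by
    intro i i' j j' h1 h2 hs1 hs2 hlt
    have hj : (j' : ℕ) < j := by omega
    obtain ⟨hc1, hc2⟩ := hcross i i' j j' h1 h2 hlt hj
    exact ⟨hc1, hc2⟩
  have tri : ∀ (i i' : Fin l) (j j' : Fin m), L.Adj (p i) (q j) → L.Adj (p i') (q j') →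
      (i : ℕ) + (j : ℕ) = h → (i' : ℕ) + (j' : ℕ) = h → (i, j) ≠ (i', j') →
      (((i : ℕ) < i' ∧ (j' : ℕ) < j ∧ (i' : ℕ) = i + 1 ∧ (j : ℕ) = j' + 1) ∨
       ((i' : ℕ) < i ∧ (j : ℕ) < j' ∧ (i : ℕ) = i' + 1 ∧ (j' : ℕ) = j + 1)) := by
    intro i i' j j' h1 h2 hs1 hs2 hne
    have hii : (i : ℕ) ≠ (i' : ℕ) := by
      intro heq
      apply hne
      have : i = i' := Fin.ext heq
      subst this
      have : j = j' := Fin.ext (by omega)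
      subst this; rfl
    rcases lt_or_gt_of_ne hii with hlt | hlt
    · obtain ⟨a, b⟩ := key i i' j j' h1 h2 hs1 hs2 hlt
      exact Or.inl ⟨hlt, by omega, a, b⟩
    · obtain ⟨a, b⟩ := key i' i j' j h2 h1 hs2 hs1 hlt
      exact Or.inr ⟨hlt, by omega, a, b⟩
  refine ⟨?_, tri⟩
  by_contra hc
  push_neg at hc
  rw [show (2 : ℕ) < _ ↔ _ from Set.two_lt_ncard (Set.toFinite _)] at hc
  obtain ⟨x, hx, y, hy, z, hz, hxy, hxz, hyz⟩ := hc
  simp only [Set.mem_setOf_eq] at hx hy hz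
  -- first coordinates are pairwise distinct
  have fst_ne : ∀ a b : Fin l × Fin m,
      (L.Adj (p a.1) (q a.2) ∧ (a.1 : ℕ) + (a.2 : ℕ) = h) →
      (L.Adj (p b.1) (q b.2) ∧ (b.1 : ℕ) + (b.2 : ℕ) = h) →
      a ≠ b → (a.1 : ℕ) ≠ (b.1 : ℕ) := by
    intro a b ha hb hab heq
    apply hab
    have h1 : a.1 = b.1 := Fin.ext heq
    have h2 : a.2 = b.2 := Fin.ext (by omega)
    exact Prod.ext h1 h2
  have nxy := fst_ne x y hx hy hxy
  have nxz := fst_ne x z hx hz hxz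
  have nyz := fst_ne y z hy hz hyz
  have succ : ∀ a b : Fin l × Fin m,
      (L.Adj (p a.1) (q a.2) ∧ (a.1 : ℕ) + (a.2 : ℕ) = h) →
      (L.Adj (p b.1) (q b.2) ∧ (b.1 : ℕ) + (b.2 : ℕ) = h) →
      (a.1 : ℕ) < (b.1 : ℕ) → (b.1 : ℕ) = (a.1 : ℕ) + 1 := by
    intro a b ha hb hlt
    exact (key a.1 b.1 a.2 b.2 ha.1 hb.1 ha.2 hb.2 hlt).1
  have sxy : (x.1 : ℕ) < y.1 → (y.1 : ℕ) = x.1 + 1 := succ x y hx hy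
  have syx : (y.1 : ℕ) < x.1 → (x.1 : ℕ) = y.1 + 1 := succ y x hy hx
  have sxz : (x.1 : ℕ) < z.1 → (z.1 : ℕ) = x.1 + 1 := succ x z hx hz
  have szx : (z.1 : ℕ) < x.1 → (x.1 : ℕ) = z.1 + 1 := succ z x hz hx
  have syz : (y.1 : ℕ) < z.1 → (z.1 : ℕ) = y.1 + 1 := succ y z hy hz
  have szy : (z.1 : ℕ) < y.1 → (y.1 : ℕ) = z.1 + 1 := succ z y hz hy
  omega
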